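/- Let ψ be an additive character of a nonarchimedean local field F with conductor 𝔬 and Haar measure with vol(𝔬) = 1. Then the Fourier transform of the function x ↦ ψ(1/x)·1_𝔬(x) (defined for x ∈ 𝔬∖{0}, extended by 0) satisfies, for |ξ| > max(1, q²): 𝓕(ψ(1/·)1_𝔬)(ξ) := ∫_𝔬 ψ(x⁻¹ − ξx) dx = |ξ|⁻¹ ∫_{|x|² = |ξ|} ψ(ξ x⁻¹ − x) dx. -/

import Mathlib

open MeasureTheory Set ENNReal

namespace Stmt19

/-- Bundled context for the local field computation. -/
structure Ctx (F : Type*) [Field F] [MeasurableSpace F] where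
  μ : Measure F
  abs : F → ℝ
  q : ℝ
  ψ : F → ℂ
  hq : 1 < q
  habs_meas : Measurable abs
  habs_nonneg : ∀ x, 0 ≤ abs x
  habs_eq_zero : ∀ x, abs x = 0 ↔ x = 0
  habs_mul : ∀ x y, abs (x * y) = abs x * abs y
  habs_add : ∀ x y, abs (x + y) ≤ max (abs x) (abs y)
  habs_vals : ∀ x : F, x ≠ 0 → ∃ n : ℤ, abs x = q ^ n
  hμ_inv : ∀ (a : F) (s : Set F), MeasurableSet s → μ ((fun x => a + x) ⁻¹' s) = μ s
  hμ_scale : ∀ a : F, a ≠ 0 → ∀ s : Set F, MeasurableSet s →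
      μ ((fun x => a * x) ⁻¹' s) = ENNReal.ofReal ((abs a)⁻¹) * μ s
  hμ_fin : ∀ n : ℤ, μ {x : F | abs x ≤ q ^ n} < ⊤
  hμ_int : μ {x : F | abs x ≤ 1} = 1
  hψ_meas : Measurable ψ
  hψ_add : ∀ x y, ψ (x + y) = ψ x * ψ y
  hψ_triv : ∀ x, abs x ≤ 1 → ψ x = 1
  hψ_nontriv : ∃ x, abs x ≤ q ∧ ψ x ≠ 1

namespace Ctx

variable {F : Type*} [Field F] [MeasurableSpace F] (c : Ctx F)

lemma q_pos : 0 < c.q := lt_trans one_pos c.hq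

lemma abs_zero : c.abs 0 = 0 := (c.habs_eq_zero 0).2 rfl

lemma abs_pos {x : F} (hx : x ≠ 0) : 0 < c.abs x :=
  lt_of_le_of_ne (c.habs_nonneg x) (fun h => hx ((c.habs_eq_zero x).1 h.symm))

lemma abs_one : c.abs 1 = 1 := by
  have h := c.habs_mul 1 1
  rw [one_mul] at h
  have h1 : 0 < c.abs 1 := c.abs_pos one_ne_zero
  nlinarith

lemma abs_neg (x : F) : c.abs (-x) = c.abs x := by
  have h1 : c.abs (-1 : F) = 1 := by
    have h := c.habs_mul (-1) (-1)
    rw [neg_one_mul, neg_neg, c.abs_one] at h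
    nlinarith [c.habs_nonneg (-1 : F), c.habs_nonneg (1 : F)]
  calc c.abs (-x) = c.abs ((-1) * x) := by rw [neg_one_mul]
  _ = c.abs x := by rw [c.habs_mul, h1, one_mul]

lemma abs_sub_comm (x y : F) : c.abs (x - y) = c.abs (y - x) := by
  rw [← c.abs_neg (x - y), neg_sub]

lemma abs_inv (x : F) : c.abs x⁻¹ = (c.abs x)⁻¹ := by
  rcases eq_or_ne x 0 with rfl | hx
  · simp [c.abs_zero]
  · have h := c.habs_mul x x⁻¹
    rw [mul_inv_cancel₀ hx, c.abs_one] at h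
    exact (inv_eq_of_mul_eq_one_right h.symm).symm

lemma habs_sub (x y : F) : c.abs (x - y) ≤ max (c.abs x) (c.abs y) := by
  have := c.habs_add x (-y)
  rwa [c.abs_neg, ← sub_eq_add_neg] at this

/-- ultrametric: if `|y| < |x|` then `|x + y| = |x|`. -/
lemma abs_add_eq {x y : F} (h : c.abs y < c.abs x) : c.abs (x + y) = c.abs x := by
  have h1 := c.habs_add x y
  have h2 : c.abs x ≤ max (c.abs (x + y)) (c.abs y) := by
    have := c.habs_sub (x + y) y
    simpa using this
  rcases le_total (c.abs y) (c.abs (x + y)) with hy | hy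
  · rw [max_eq_left hy] at h2
    rcases le_total (c.abs y) (c.abs x) with hx | hx
    · rw [max_eq_left hx] at h1; exact le_antisymm h1 h2
    · linarith
  · rw [max_eq_right hy] at h2; linarith

lemma abs_sub_eq {x y : F} (h : c.abs y < c.abs x) : c.abs (x - y) = c.abs x := by
  rw [sub_eq_add_neg]
  exact c.abs_add_eq (by rwa [c.abs_neg])

lemma abs_pow (x : F) (n : ℕ) : c.abs (x ^ n) = c.abs x ^ n := by
  induction n with
  | zero => simp [c.abs_one]
  | succ n ih => rw [pow_succ, pow_succ, c.habs_mul, ih]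

lemma abs_zpow (x : F) (n : ℤ) : c.abs (x ^ n) = c.abs x ^ n := by
  rcases le_or_gt 0 n with hn | hn
  · lift n to ℕ using hn
    rw [zpow_natCast, zpow_natCast, c.abs_pow]
  · have h : x ^ n = (x ^ (-n).toNat)⁻¹ := by
      rw [← zpow_natCast, Int.toNat_of_nonneg (by omega : (0:ℤ) ≤ -n), zpow_neg, inv_inv]
    have h' : (c.abs x) ^ n = ((c.abs x) ^ (-n).toNat)⁻¹ := by
      rw [← zpow_natCast, Int.toNat_of_nonneg (by omega : (0:ℤ) ≤ -n), zpow_neg, inv_inv]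
    rw [h, c.abs_inv, c.abs_pow, h']

lemma psi_zero : c.ψ 0 = 1 := c.hψ_triv 0 (by rw [c.abs_zero]; norm_num)

lemma psi_ne_zero (x : F) : c.ψ x ≠ 0 := by
  intro h
  have := c.hψ_add x (-x)
  rw [add_neg_cancel, c.psi_zero, h, zero_mul] at this
  exact one_ne_zero this

end Ctx

/-- If `C ⊆ U`, `U` measurable with finite measure and outer measures add up,
then `C` is null measurable. -/
lemma nullMeasurableSet_of_add {α : Type*} [MeasurableSpace α] {μ : Measure α} {C U : Set α}
    (hU : MeasurableSet U) (hCU : C ⊆ U) (hfin : μ U ≠ ⊤)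
    (hadd : μ C + μ (U \ C) ≤ μ U) : NullMeasurableSet C μ := by
  have hAm : MeasurableSet (toMeasurable μ C ∩ U) := (measurableSet_toMeasurable μ C).inter hU
  have hCA : C ⊆ toMeasurable μ C ∩ U := subset_inter (subset_toMeasurable μ C) hCU
  have hμA : μ (toMeasurable μ C ∩ U) = μ C :=
    le_antisymm (le_trans (measure_mono inter_subset_left) (measure_toMeasurable C).le)
      (measure_mono hCA)
  have hVm : MeasurableSet (toMeasurable μ (U \ C) ∩ U) :=
    (measurableSet_toMeasurable μ (U \ C)).inter hU
  have hμV : μ (toMeasurable μ (U \ C) ∩ U) = μ (U \ C) :=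
    le_antisymm (le_trans (measure_mono inter_subset_left) (measure_toMeasurable (U \ C)).le)
      (measure_mono (subset_inter (subset_toMeasurable μ (U \ C)) diff_subset))
  have hUAV : U = (toMeasurable μ C ∩ U) ∪ (toMeasurable μ (U \ C) ∩ U) := by
    apply Subset.antisymm
    · intro x hx
      by_cases hxC : x ∈ C
      · exact Or.inl (hCA hxC)
      · exact Or.inr ⟨subset_toMeasurable μ (U \ C) ⟨hx, hxC⟩, hx⟩
    · exact union_subset inter_subset_right inter_subset_right
  have hIE := measure_union_add_inter (μ := μ) (toMeasurable μ C ∩ U) hVm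
  rw [← hUAV, hμA, hμV] at hIE
  have h0 : μ ((toMeasurable μ C ∩ U) ∩ (toMeasurable μ (U \ C) ∩ U)) = 0 := by
    have h1 : μ U + μ ((toMeasurable μ C ∩ U) ∩ (toMeasurable μ (U \ C) ∩ U)) ≤ μ U + 0 := by
      rw [hIE, add_zero]; exact hadd
    exact le_antisymm ((ENNReal.add_le_add_iff_left hfin).1 h1) zero_le
  have hACV : (toMeasurable μ C ∩ U) \ C ⊆
      (toMeasurable μ C ∩ U) ∩ (toMeasurable μ (U \ C) ∩ U) := by
    rintro x ⟨⟨hx1, hx2⟩, hxC⟩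
    exact ⟨⟨hx1, hx2⟩, subset_toMeasurable μ (U \ C) ⟨hx2, hxC⟩, hx2⟩
  refine ⟨toMeasurable μ C ∩ U, hAm, ?_⟩
  rw [MeasureTheory.ae_eq_set]
  constructor
  · rw [diff_eq_empty.2 hCA]; exact measure_empty
  · exact measure_mono_null hACV h0

namespace Ctx

variable {F : Type*} [Field F] [MeasurableSpace F] (c : Ctx F)

/-- closed ball of radius `q^j` -/
def ball (j : ℤ) : Set F := {x | c.abs x ≤ c.q ^ j}

/-- sphere of radius `q^j` -/
def sph (j : ℤ) : Set F := {x | c.abs x = c.q ^ j}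

/-- coset ball centered at `y` -/
def cball (y : F) (j : ℤ) : Set F := {x | c.abs (x - y) ≤ c.q ^ j}

lemma measurableSet_ball (j : ℤ) : MeasurableSet (c.ball j) :=
  c.habs_meas measurableSet_Iic

lemma measurableSet_sph (j : ℤ) : MeasurableSet (c.sph j) :=
  c.habs_meas (measurableSet_singleton _)

lemma ball_zero_eq : c.ball 0 = {x | c.abs x ≤ 1} := by
  ext x; simp [Ctx.ball]

lemma ball_mono {j k : ℤ} (h : j ≤ k) : c.ball j ⊆ c.ball k :=
  fun x hx => le_trans hx (zpow_le_zpow_right₀ c.hq.le h)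

lemma meas_ball_fin (j : ℤ) : c.μ (c.ball j) ≠ ⊤ := (c.hμ_fin j).ne

lemma mem_ball_zero {j : ℤ} : (0:F) ∈ c.ball j := by
  show c.abs 0 ≤ _
  rw [c.abs_zero]
  exact (zpow_pos c.q_pos j).le

/-- a nontrivial character point of absolute value exactly `q`. -/
lemma exists_nontriv : ∃ z : F, c.abs z = c.q ∧ c.ψ z ≠ 1 := by
  obtain ⟨z, hz, hz1⟩ := c.hψ_nontriv
  refine ⟨z, ?_, hz1⟩
  have hgt : 1 < c.abs z := by
    by_contra h
    exact hz1 (c.hψ_triv z (not_lt.1 h))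
  have hz0 : z ≠ 0 := by
    intro h; rw [h, c.abs_zero] at hgt; linarith
  obtain ⟨n, hn⟩ := c.habs_vals z hz0
  rw [hn] at hz hgt ⊢
  have h1 : (0:ℤ) < n := by
    by_contra h
    have := zpow_le_zpow_right₀ c.hq.le (not_lt.1 h)
    rw [zpow_zero] at this
    linarith
  have h2 : n ≤ 1 := (zpow_le_zpow_iff_right₀ c.hq).1 (by rw [zpow_one]; exact hz)
  have : n = 1 := by omega
  rw [this, zpow_one]

lemma exists_pi : ∃ π : F, c.abs π = c.q := ⟨_, (c.exists_nontriv).choose_spec.1⟩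

lemma meas_ball (j : ℤ) : c.μ (c.ball j) = ENNReal.ofReal (c.q ^ j) := by
  obtain ⟨π, hπ⟩ := c.exists_pi
  have hπ0 : π ≠ 0 := by
    intro h; rw [h, c.abs_zero] at hπ; linarith [c.q_pos]
  set a := π ^ (-j) with ha
  have ha0 : a ≠ 0 := zpow_ne_zero _ hπ0
  have haabs : c.abs a = c.q ^ (-j) := by rw [ha, c.abs_zpow, hπ]
  have hmeas : MeasurableSet {x : F | c.abs x ≤ 1} := c.habs_meas measurableSet_Iic
  have hpre : (fun x => a * x) ⁻¹' {x : F | c.abs x ≤ 1} = c.ball j := by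
    ext x
    simp only [mem_preimage, mem_setOf_eq, Ctx.ball, c.habs_mul, haabs]
    rw [zpow_neg]
    rw [inv_mul_le_iff₀ (zpow_pos c.q_pos _), mul_one]
  have := c.hμ_scale a ha0 _ hmeas
  rw [hpre, c.hμ_int, mul_one, haabs, zpow_neg, inv_inv] at this
  exact this

lemma meas_cball (y : F) (j : ℤ) : c.μ (c.cball y j) = ENNReal.ofReal (c.q ^ j) := by
  have hpre : (fun x => -y + x) ⁻¹' (c.ball j) = c.cball y j := by
    ext x
    simp only [mem_preimage, Ctx.ball, Ctx.cball, mem_setOf_eq, neg_add_eq_sub]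
  rw [← hpre, c.hμ_inv _ _ (c.measurableSet_ball j), c.meas_ball]

lemma nullMeasurable_cball (y : F) (j : ℤ) : NullMeasurableSet (c.cball y j) c.μ := by
  obtain ⟨k₀, hk₀⟩ : ∃ k₀ : ℤ, c.abs y ≤ c.q ^ k₀ := by
    rcases eq_or_ne y 0 with rfl | hy
    · exact ⟨j, by rw [c.abs_zero]; exact (zpow_pos c.q_pos j).le⟩
    · obtain ⟨n, hn⟩ := c.habs_vals y hy; exact ⟨n, hn.le⟩
  set K := max j k₀ with hK
  have hjK : c.q ^ j ≤ c.q ^ K := zpow_le_zpow_right₀ c.hq.le (le_max_left _ _)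
  have hyK : c.abs y ≤ c.q ^ K := le_trans hk₀ (zpow_le_zpow_right₀ c.hq.le (le_max_right _ _))
  have hCU : c.cball y j ⊆ c.ball K := by
    intro x hx
    have : c.abs x = c.abs ((x - y) + y) := by rw [sub_add_cancel]
    rw [Ctx.ball, mem_setOf_eq, this]
    calc c.abs ((x - y) + y) ≤ max (c.abs (x - y)) (c.abs y) := c.habs_add _ _
    _ ≤ c.q ^ K := max_le (le_trans hx hjK) hyK
  apply nullMeasurableSet_of_add (c.measurableSet_ball K) hCU (c.meas_ball_fin K)
  have hsub : c.ball K \ c.cball y j ⊆ (fun x => -y + x) ⁻¹' (c.ball K \ c.ball j) := by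
    rintro x ⟨hxU, hxC⟩
    constructor
    · show c.abs (-y + x) ≤ _
      rw [neg_add_eq_sub]
      calc c.abs (x - y) ≤ max (c.abs x) (c.abs y) := c.habs_sub x y
      _ ≤ c.q ^ K := max_le hxU hyK
    · show ¬ (c.abs (-y + x) ≤ _)
      rw [neg_add_eq_sub]
      exact hxC
  have hdiff : c.μ ((fun x => -y + x) ⁻¹' (c.ball K \ c.ball j))
      = ENNReal.ofReal (c.q ^ K) - ENNReal.ofReal (c.q ^ j) := by
    rw [c.hμ_inv _ _ ((c.measurableSet_ball K).diff (c.measurableSet_ball j)),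
      measure_diff (c.ball_mono (le_max_left _ _)) (c.measurableSet_ball j).nullMeasurableSet
        (c.meas_ball_fin j), c.meas_ball, c.meas_ball]
  calc c.μ (c.cball y j) + c.μ (c.ball K \ c.cball y j)
      ≤ ENNReal.ofReal (c.q ^ j) + (ENNReal.ofReal (c.q ^ K) - ENNReal.ofReal (c.q ^ j)) := by
        rw [c.meas_cball]
        exact add_le_add le_rfl (le_trans (measure_mono hsub) hdiff.le)
  _ = ENNReal.ofReal (c.q ^ K) := by
        rw [add_comm, tsub_add_cancel_of_le (ENNReal.ofReal_le_ofReal hjK)]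
  _ = c.μ (c.ball K) := (c.meas_ball K).symm


/-- the ball as an additive subgroup -/
def bgr (j : ℤ) : AddSubgroup F where
  carrier := c.ball j
  zero_mem' := c.mem_ball_zero
  add_mem' := fun {a b} ha hb => le_trans (c.habs_add a b) (max_le ha hb)
  neg_mem' := fun {a} ha => by
    show c.abs (-a) ≤ _
    rw [c.abs_neg]; exact ha

lemma mem_bgr_iff {j : ℤ} {x : F} : x ∈ c.bgr j ↔ c.abs x ≤ c.q ^ j := Iff.rfl

lemma mk_eq_iff {j : ℤ} {x y : F} :
    (QuotientAddGroup.mk x : F ⧸ c.bgr j) = QuotientAddGroup.mk y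
      ↔ c.abs (x - y) ≤ c.q ^ j := by
  rw [QuotientAddGroup.eq_iff_sub_mem]; exact Iff.rfl

lemma mk_out {j : ℤ} (z : F ⧸ c.bgr j) :
    (QuotientAddGroup.mk (Quotient.out z) : F ⧸ c.bgr j) = z := Quotient.out_eq' z

lemma abs_out_sub {j : ℤ} {z : F ⧸ c.bgr j} {a : F}
    (h : QuotientAddGroup.mk a = z) : c.abs (Quotient.out z - a) ≤ c.q ^ j :=
  (c.mk_eq_iff).1 (by rw [c.mk_out, h])

lemma cball_disjoint {j : ℤ} {y y' : F}
    (h : (QuotientAddGroup.mk y : F ⧸ c.bgr j) ≠ QuotientAddGroup.mk y') :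
    Disjoint (c.cball y j) (c.cball y' j) := by
  rw [Set.disjoint_left]
  intro x hx hx'
  apply h
  rw [c.mk_eq_iff]
  have : y - y' = (x - y') - (x - y) := by ring
  rw [this]
  exact le_trans (c.habs_sub _ _) (max_le hx' hx)

lemma finite_image (j K : ℤ) (A : Set F) (hAK : A ⊆ c.ball K) :
    Set.Finite ((QuotientAddGroup.mk : F → F ⧸ c.bgr j) '' A) := by
  by_contra hinf
  have hinf' : ((QuotientAddGroup.mk : F → F ⧸ c.bgr j) '' A).Infinite := hinf
  obtain e := hinf'.natEmbedding
  set Y : ℕ → F := fun i => Quotient.out (e i : F ⧸ c.bgr j) with hY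
  have hdisj : Pairwise (Function.onFun (AEDisjoint c.μ) (fun i => c.cball (Y i) j)) := by
    intro i k hik
    apply Disjoint.aedisjoint
    apply c.cball_disjoint
    intro hmk
    apply hik
    have : (e i : F ⧸ c.bgr j) = (e k : F ⧸ c.bgr j) := by
      rw [← c.mk_out (e i : F ⧸ c.bgr j), ← c.mk_out (e k : F ⧸ c.bgr j)]
      exact hmk
    exact e.injective (Subtype.ext this)
  have hsub : ∀ i, c.cball (Y i) j ⊆ c.ball (max K j) := by
    intro i x hx
    obtain ⟨a, haA, hae⟩ := (e i).2
    have h1 : c.abs (Y i - a) ≤ c.q ^ j := c.abs_out_sub hae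
    have h2 : c.abs (Y i) ≤ c.q ^ (max K j) := by
      have : Y i = (Y i - a) + a := by ring
      rw [this]
      refine le_trans (c.habs_add _ _) (max_le ?_ ?_)
      · exact le_trans h1 (zpow_le_zpow_right₀ c.hq.le (le_max_right _ _))
      · exact le_trans (hAK haA) (zpow_le_zpow_right₀ c.hq.le (le_max_left _ _))
    have : x = (x - Y i) + Y i := by ring
    show c.abs x ≤ _
    rw [this]
    refine le_trans (c.habs_add _ _) (max_le ?_ h2)
    exact le_trans hx (zpow_le_zpow_right₀ c.hq.le (le_max_right _ _))
  have hμU : c.μ (⋃ i, c.cball (Y i) j) = ∑' _ : ℕ, ENNReal.ofReal (c.q ^ j) := by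
    rw [measure_iUnion₀ hdisj (fun i => c.nullMeasurable_cball (Y i) j)]
    congr 1
    ext i
    exact c.meas_cball (Y i) j
  have htop : c.μ (⋃ i, c.cball (Y i) j) = ⊤ := by
    rw [hμU]
    exact ENNReal.tsum_const_eq_top_of_ne_zero
      (by simp [ENNReal.ofReal_eq_zero, not_le, zpow_pos c.q_pos j])
  have hle : c.μ (⋃ i, c.cball (Y i) j) ≤ c.μ (c.ball (max K j)) :=
    measure_mono (Set.iUnion_subset hsub)
  rw [htop] at hle
  exact c.meas_ball_fin (max K j) (top_le_iff.1 hle)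

/-- Integral of a locally constant function over a bounded coset-closed set. -/
lemma integral_loc_const {j K : ℤ} {A : Set F} (hAK : A ⊆ c.ball K)
    (hcl : ∀ x ∈ A, ∀ y : F, c.abs (y - x) ≤ c.q ^ j → y ∈ A)
    {f : F → ℂ} (hf : ∀ x ∈ A, ∀ y : F, c.abs (y - x) ≤ c.q ^ j → f y = f x) :
    IntegrableOn f A c.μ ∧
    ∫ x in A, f x ∂c.μ
      = ∑ z ∈ (c.finite_image j K A hAK).toFinset, (c.q ^ j) • f (Quotient.out z) := by
  classical
  set S := (c.finite_image j K A hAK).toFinset with hS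
  have hrepA : ∀ z ∈ S, Quotient.out z ∈ A := by
    intro z hz
    rw [hS, Set.Finite.mem_toFinset] at hz
    obtain ⟨a, haA, hae⟩ := hz
    exact hcl a haA _ (c.abs_out_sub hae)
  have hAeq : A = ⋃ z ∈ S, c.cball (Quotient.out z) j := by
    apply Subset.antisymm
    · intro x hx
      have hzS : (QuotientAddGroup.mk x : F ⧸ c.bgr j) ∈ S := by
        rw [hS, Set.Finite.mem_toFinset]
        exact ⟨x, hx, rfl⟩
      refine Set.mem_biUnion hzS ?_
      show c.abs (x - Quotient.out (QuotientAddGroup.mk x)) ≤ c.q ^ j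
      rw [c.abs_sub_comm]
      exact c.abs_out_sub rfl
    · intro x hx
      obtain ⟨z, hzS, hxz⟩ := Set.mem_iUnion₂.1 hx
      exact hcl _ (hrepA z hzS) x hxz
  have hint : ∀ z ∈ S, IntegrableOn f (c.cball (Quotient.out z) j) c.μ := by
    intro z hz
    have hconst : IntegrableOn (fun _ => f (Quotient.out z)) (c.cball (Quotient.out z) j) c.μ := by
      refine integrableOn_const ?_ enorm_ne_top
      rw [c.meas_cball]
      exact ENNReal.ofReal_ne_top
    apply hconst.congr_fun_ae
    filter_upwards [ae_restrict_mem₀ (c.nullMeasurable_cball (Quotient.out z) j)] with x hx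
    exact (hf _ (hrepA z hz) x hx).symm
  have hIOn : IntegrableOn f A c.μ := by
    rw [hAeq]
    exact (integrableOn_finset_iUnion).2 hint
  refine ⟨hIOn, ?_⟩
  have hAeq2 : A = ⋃ z : {z // z ∈ S}, c.cball (Quotient.out z.1) j := by
    rw [hAeq]
    ext x
    simp only [Set.mem_iUnion, Set.mem_iUnion₂]
    constructor
    · rintro ⟨z, hz, hx⟩; exact ⟨⟨z, hz⟩, hx⟩
    · rintro ⟨⟨z, hz⟩, hx⟩; exact ⟨z, hz, hx⟩
  rw [hAeq2]
  rw [integral_iUnion_ae (fun z => c.nullMeasurable_cball _ j)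
      (fun z z' hzz' => (c.cball_disjoint (by
        intro h
        apply hzz'
        apply Subtype.ext
        rw [← c.mk_out z.1, ← c.mk_out z'.1, h])).aedisjoint)
      (by rw [← hAeq2]; exact hIOn)]
  rw [tsum_fintype]
  have hterm : ∀ z : {z // z ∈ S},
      ∫ x in c.cball (Quotient.out z.1) j, f x ∂c.μ = (c.q ^ j) • f (Quotient.out z.1) := by
    intro z
    have : ∫ x in c.cball (Quotient.out z.1) j, f x ∂c.μ
        = ∫ _ in c.cball (Quotient.out z.1) j, f (Quotient.out z.1) ∂c.μ := by
      apply setIntegral_congr_ae₀ (c.nullMeasurable_cball _ j)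
      filter_upwards with x hx
      exact hf _ (hrepA z.1 z.2) x hx
    rw [this, setIntegral_const, measureReal_def, c.meas_cball,
      ENNReal.toReal_ofReal (zpow_pos c.q_pos j).le]
  rw [← Finset.sum_coe_sort S (fun z => (c.q ^ j) • f (Quotient.out z))]
  exact Finset.sum_congr rfl (fun z _ => hterm z)



lemma abs_nat_le_one (N : ℕ) : c.abs (N : F) ≤ 1 := by
  induction N with
  | zero => rw [Nat.cast_zero, c.abs_zero]; norm_num
  | succ n ih =>
      rw [Nat.cast_succ]
      refine le_trans (c.habs_add _ _) (max_le ih ?_)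
      rw [c.abs_one]

lemma exists_small_nat : ∃ N : ℕ, 0 < N ∧ c.abs (N : F) ≤ c.q⁻¹ := by
  by_contra hcon
  push_neg at hcon
  have habs1 : ∀ N : ℕ, 0 < N → c.abs (N : F) = 1 := by
    intro N hN
    have hlt := hcon N hN
    have hne : (N : F) ≠ 0 := by
      intro h
      rw [h, c.abs_zero] at hlt
      have : 0 < c.q⁻¹ := inv_pos.2 c.q_pos
      linarith
    obtain ⟨n, hn⟩ := c.habs_vals _ hne
    rw [hn] at hlt ⊢
    have h1 : c.q ^ n ≤ c.q ^ (0:ℤ) := by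
      rw [zpow_zero]
      rw [← hn]; exact c.abs_nat_le_one N
    have h2 : c.q ^ (-1 : ℤ) < c.q ^ n := by rwa [zpow_neg_one]
    have hn0 : n = 0 := by
      have := (zpow_le_zpow_iff_right₀ c.hq).1 h1
      have := (zpow_lt_zpow_iff_right₀ c.hq).1 h2
      omega
    rw [hn0, zpow_zero]
  -- distinct naturals are at distance 1
  have hdist : ∀ i j : ℕ, i < j → c.abs ((j : F) - (i : F)) = 1 := by
    intro i j hij
    have : (j : F) - (i : F) = ((j - i : ℕ) : F) := by
      rw [Nat.cast_sub hij.le]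
    rw [this]
    exact habs1 _ (by omega)
  set M : ℕ := Nat.ceil c.q + 1 with hM
  have huni : (⋃ i ∈ Finset.range M, c.cball (i : F) (-1)) ⊆ c.ball 0 := by
    intro x hx
    obtain ⟨i, hi, hxi⟩ := Set.mem_iUnion₂.1 hx
    show c.abs x ≤ c.q ^ (0:ℤ)
    rw [zpow_zero]
    have : x = (x - (i:F)) + (i:F) := by ring
    rw [this]
    refine le_trans (c.habs_add _ _) (max_le ?_ (c.abs_nat_le_one i))
    refine le_trans hxi ?_
    rw [zpow_neg_one]
    rw [inv_le_one_iff₀]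
    right; exact c.hq.le
  have hdisj : (↑(Finset.range M) : Set ℕ).Pairwise
      (Function.onFun (AEDisjoint c.μ) (fun i => c.cball (i : F) (-1))) := by
    intro i _ j _ hij
    apply Disjoint.aedisjoint
    rw [Set.disjoint_left]
    intro x hxi hxj
    rcases Nat.lt_or_ge i j with h | h
    · have := hdist i j h
      have hle : c.abs ((j:F) - (i:F)) ≤ c.q ^ (-1:ℤ) := by
        have heq : (j:F) - (i:F) = (x - (i:F)) - (x - (j:F)) := by ring
        rw [heq]
        exact le_trans (c.habs_sub _ _) (max_le hxi hxj)
      rw [this, zpow_neg_one] at hle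
      have : c.q⁻¹ < 1 := by
        rw [inv_lt_one_iff₀]; right; exact c.hq
      linarith
    · have hij' : j < i := by omega
      have := hdist j i hij'
      have hle : c.abs ((i:F) - (j:F)) ≤ c.q ^ (-1:ℤ) := by
        have heq : (i:F) - (j:F) = (x - (j:F)) - (x - (i:F)) := by ring
        rw [heq]
        exact le_trans (c.habs_sub _ _) (max_le hxj hxi)
      rw [this, zpow_neg_one] at hle
      have : c.q⁻¹ < 1 := by
        rw [inv_lt_one_iff₀]; right; exact c.hq
      linarith
  have hsum := measure_biUnion_finset₀ hdisj
    (fun i _ => c.nullMeasurable_cball (i : F) (-1))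
  have hle : (M : ℝ≥0∞) * ENNReal.ofReal (c.q ^ (-1:ℤ)) ≤ 1 := by
    calc (M : ℝ≥0∞) * ENNReal.ofReal (c.q ^ (-1:ℤ))
        = ∑ i ∈ Finset.range M, c.μ (c.cball (i : F) (-1)) := by
          simp only [c.meas_cball]
          rw [Finset.sum_const, Finset.card_range, nsmul_eq_mul]
    _ = c.μ (⋃ i ∈ Finset.range M, c.cball (i : F) (-1)) := hsum.symm
    _ ≤ c.μ (c.ball 0) := measure_mono huni
    _ = 1 := by rw [c.ball_zero_eq, c.hμ_int]
  have hreal : (M : ℝ) * c.q ^ (-1:ℤ) ≤ 1 := by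
    have h1 : (M : ℝ≥0∞) * ENNReal.ofReal (c.q ^ (-1:ℤ))
        = ENNReal.ofReal ((M : ℝ) * c.q ^ (-1:ℤ)) := by
      rw [ENNReal.ofReal_mul (by positivity), ENNReal.ofReal_natCast]
    rw [h1, ← ENNReal.ofReal_one, ENNReal.ofReal_le_ofReal_iff (by norm_num)] at hle
    exact hle
  have hMq : c.q < (M : ℝ) := by
    rw [hM]
    push_cast
    have := Nat.le_ceil c.q
    linarith
  rw [zpow_neg_one] at hreal
  have hq0 : 0 < c.q := c.q_pos
  rw [mul_inv_le_iff₀ hq0, one_mul] at hreal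
  linarith

lemma psi_nat_mul (n : ℕ) (x : F) : c.ψ ((n : F) * x) = c.ψ x ^ n := by
  induction n with
  | zero => rw [Nat.cast_zero, zero_mul, c.psi_zero, pow_zero]
  | succ k ih =>
      rw [Nat.cast_succ, add_mul, one_mul, c.hψ_add, ih, pow_succ]

lemma psi_abs_one (x : F) : ‖c.ψ x‖ = 1 := by
  obtain ⟨N, hN0, hNle⟩ := c.exists_small_nat
  obtain ⟨k, hk⟩ : ∃ k : ℕ, c.abs x ≤ c.q ^ k :=
    let ⟨k, hk⟩ := pow_unbounded_of_one_lt (c.abs x) c.hq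
    ⟨k, hk.le⟩
  have habs : c.abs (((N ^ k : ℕ) : F) * x) ≤ 1 := by
    rw [c.habs_mul]
    push_cast
    rw [c.abs_pow]
    have h1 : c.abs (N : F) ^ k ≤ (c.q⁻¹) ^ k :=
      pow_le_pow_left₀ (c.habs_nonneg _) hNle k
    have h2 : (c.q⁻¹) ^ k * c.abs x ≤ (c.q⁻¹)^k * c.q ^ k :=
      mul_le_mul_of_nonneg_left hk (pow_nonneg (inv_nonneg.2 c.q_pos.le) k)
    have h3 : (c.q⁻¹)^k * c.q^k = 1 := by
      rw [← mul_pow, inv_mul_cancel₀ (ne_of_gt c.q_pos), one_pow]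
    calc c.abs (N:F) ^ k * c.abs x ≤ (c.q⁻¹)^k * c.abs x :=
          mul_le_mul_of_nonneg_right h1 (c.habs_nonneg x)
    _ ≤ 1 := by rw [← h3]; exact h2
  have hpow : c.ψ x ^ (N ^ k) = 1 := by
    rw [← c.psi_nat_mul (N ^ k) x]
    exact c.hψ_triv _ habs
  have h4 : ‖c.ψ x‖ ^ (N ^ k) = 1 := by
    rw [← norm_pow, hpow, norm_one]
  have ha0 : 0 ≤ ‖c.ψ x‖ := norm_nonneg _
  by_contra hne
  rcases lt_or_gt_of_ne hne with hlt | hgt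
  · have hlt1 : ‖c.ψ x‖ ^ (N ^ k) < 1 :=
      pow_lt_one₀ ha0 hlt (Nat.pow_pos hN0).ne'
    rw [h4] at hlt1
    exact lt_irrefl 1 hlt1
  · have hgt1 : 1 < ‖c.ψ x‖ ^ (N ^ k) :=
      one_lt_pow₀ hgt (Nat.pow_pos hN0).ne'
    rw [h4] at hgt1
    exact lt_irrefl 1 hgt1



lemma inv_expand {x y : F} (cq : 0 < c.q) (hx : x ≠ 0) (hxy : x + y ≠ 0) :
    (x + y)⁻¹ = x⁻¹ - y * (x⁻¹ * x⁻¹) + y^2 * (x⁻¹ * x⁻¹) * (x + y)⁻¹ := by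
  field_simp
  ring

lemma mem_sph_ne_zero {k : ℤ} {x : F} (hx : x ∈ c.sph k) : x ≠ 0 := by
  intro h
  have : c.abs x = c.q ^ k := hx
  rw [h, c.abs_zero] at this
  exact absurd this.symm (ne_of_gt (zpow_pos c.q_pos k))

lemma abs_of_mem_sph {k : ℤ} {x : F} (hx : x ∈ c.sph k) : c.abs x = c.q ^ k := hx

lemma sph_stable {k j : ℤ} (hjk : j < k) {x y : F} (hx : x ∈ c.sph k)
    (hy : c.abs (y - x) ≤ c.q ^ j) : y ∈ c.sph k := by
  have h1 : c.abs (y - x) < c.abs x := by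
    rw [c.abs_of_mem_sph hx]
    exact lt_of_le_of_lt hy (zpow_lt_zpow_right₀ c.hq hjk)
  have : y = x + (y - x) := by ring
  show c.abs y = _
  rw [this, c.abs_add_eq h1]
  exact hx

/-- Key phase shift identity for `g x = ψ(x⁻¹ - ξ x)`. -/
lemma g_shift (ξ : F) {x u : F} (hx : x ≠ 0) (hu : c.abs u < c.abs x) :
    c.ψ ((x + u)⁻¹ - ξ * (x + u))
      = c.ψ (x⁻¹ - ξ * x) * c.ψ (-((ξ + x⁻¹ * x⁻¹) * u))
          * c.ψ (u^2 * (x⁻¹ * x⁻¹) * (x + u)⁻¹) := by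
  have hxu : x + u ≠ 0 := by
    intro h
    have := c.abs_add_eq hu
    rw [h, c.abs_zero] at this
    exact absurd this.symm (c.abs_pos hx).ne'
  rw [← c.hψ_add, ← c.hψ_add]
  congr 1
  field_simp
  ring

/-- Local behavior of `g` on the sphere of radius `q^k`, at scale `q^j`. -/
lemma g_local (ξ : F) {k j : ℤ} (hjk : j < k) (h2j3k : 2*j ≤ 3*k)
    {x y : F} (hx : x ∈ c.sph k) (hy : c.abs (y - x) ≤ c.q ^ j) :
    c.ψ (y⁻¹ - ξ * y)
      = c.ψ (x⁻¹ - ξ * x) * c.ψ (-((ξ + x⁻¹ * x⁻¹) * (y - x))) := by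
  have hx0 : x ≠ 0 := c.mem_sph_ne_zero hx
  have hu : c.abs (y - x) < c.abs x := by
    rw [c.abs_of_mem_sph hx]
    exact lt_of_le_of_lt hy (zpow_lt_zpow_right₀ c.hq hjk)
  have hyx : y = x + (y - x) := by ring
  have h := c.g_shift ξ hx0 hu
  rw [← hyx] at h
  rw [h]
  have hquad : c.ψ ((y - x)^2 * (x⁻¹ * x⁻¹) * y⁻¹) = 1 := by
    apply c.hψ_triv
    simp only [c.habs_mul, c.abs_inv]
    have hay : c.abs y = c.q ^ k := c.abs_of_mem_sph (c.sph_stable hjk hx hy)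
    have hax : c.abs x = c.q ^ k := c.abs_of_mem_sph hx
    have hsq : c.abs ((y - x)^2) ≤ (c.q ^ j)^2 := by
      rw [c.abs_pow]
      exact pow_le_pow_left₀ (c.habs_nonneg _) hy 2
    rw [hax, hay]
    have hqk : (0:ℝ) < c.q ^ k := zpow_pos c.q_pos k
    calc c.abs ((y-x)^2) * ((c.q ^ k)⁻¹ * (c.q ^ k)⁻¹) * (c.q ^ k)⁻¹
        ≤ (c.q ^ j)^2 * ((c.q ^ k)⁻¹ * (c.q ^ k)⁻¹) * (c.q ^ k)⁻¹ := by
          apply mul_le_mul_of_nonneg_right _ (by positivity)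
          apply mul_le_mul_of_nonneg_right hsq (by positivity)
    _ = c.q ^ (2*j - 3*k) := by
          rw [← zpow_natCast (c.q ^ j) 2, ← zpow_mul, ← zpow_neg,
            ← zpow_add₀ (ne_of_gt c.q_pos), ← zpow_add₀ (ne_of_gt c.q_pos),
            ← zpow_add₀ (ne_of_gt c.q_pos)]
          congr 1
          push_cast
          ring
    _ ≤ 1 := by
          rw [show (1:ℝ) = c.q ^ (0:ℤ) from (zpow_zero c.q).symm]
          exact zpow_le_zpow_right₀ c.hq.le (by omega)
  rw [hquad, mul_one]

/-- full local constancy of `g` when additionally `|ξ + x⁻²| ≤ q^{-j}`. -/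
lemma g_const (ξ : F) {k j : ℤ} (hjk : j < k) (h2j3k : 2*j ≤ 3*k)
    {x y : F} (hx : x ∈ c.sph k) (hy : c.abs (y - x) ≤ c.q ^ j)
    (hc : c.abs (ξ + x⁻¹ * x⁻¹) ≤ c.q ^ (-j)) :
    c.ψ (y⁻¹ - ξ * y) = c.ψ (x⁻¹ - ξ * x) := by
  rw [c.g_local ξ hjk h2j3k hx hy]
  have : c.ψ (-((ξ + x⁻¹ * x⁻¹) * (y - x))) = 1 := by
    apply c.hψ_triv
    rw [c.abs_neg, c.habs_mul]
    calc c.abs (ξ + x⁻¹ * x⁻¹) * c.abs (y - x) ≤ c.q ^ (-j) * c.q ^ j := by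
          apply mul_le_mul hc hy (c.habs_nonneg _) (zpow_pos c.q_pos _).le
    _ = 1 := by rw [← zpow_add₀ (ne_of_gt c.q_pos)]; simp
  rw [this, mul_one]

/-- Phase shift for `h x = ψ(ξ x⁻¹ - x)`. -/
lemma h_shift (ξ : F) {x u : F} (hx : x ≠ 0) (hu : c.abs u < c.abs x) :
    c.ψ (ξ * (x + u)⁻¹ - (x + u))
      = c.ψ (ξ * x⁻¹ - x) * c.ψ (-((1 + ξ * (x⁻¹ * x⁻¹)) * u))
          * c.ψ (ξ * u^2 * (x⁻¹ * x⁻¹) * (x + u)⁻¹) := by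
  have hxu : x + u ≠ 0 := by
    intro h
    have := c.abs_add_eq hu
    rw [h, c.abs_zero] at this
    exact absurd this.symm (c.abs_pos hx).ne'
  rw [← c.hψ_add, ← c.hψ_add]
  congr 1
  field_simp
  ring

/-- local constancy of `h` on the critical sphere. -/
lemma h_const (ξ : F) {m s : ℤ} (hms : m = 2*s) (hs : 1 ≤ s) (hξa : c.abs ξ = c.q ^ m)
    {x y : F} (hx : x ∈ c.sph s) (hy : c.abs (y - x) ≤ c.q ^ (0:ℤ)) :
    c.ψ (ξ * y⁻¹ - y) = c.ψ (ξ * x⁻¹ - x) := by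
  have hx0 : x ≠ 0 := c.mem_sph_ne_zero hx
  have hu : c.abs (y - x) < c.abs x := by
    rw [c.abs_of_mem_sph hx]
    exact lt_of_le_of_lt hy (zpow_lt_zpow_right₀ c.hq (by omega))
  have hyx : y = x + (y - x) := by ring
  have h := c.h_shift ξ hx0 hu
  rw [← hyx] at h
  rw [h]
  have hax : c.abs x = c.q ^ s := c.abs_of_mem_sph hx
  have hay : c.abs y = c.q ^ s := c.abs_of_mem_sph
    (c.sph_stable (by omega : (0:ℤ) < s) hx hy)
  have hq0 : (0:ℝ) < c.q := c.q_pos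
  have hlin : c.ψ (-((1 + ξ * (x⁻¹ * x⁻¹)) * (y - x))) = 1 := by
    apply c.hψ_triv
    rw [c.abs_neg, c.habs_mul]
    have h1 : c.abs (1 + ξ * (x⁻¹ * x⁻¹)) ≤ 1 := by
      refine le_trans (c.habs_add _ _) (max_le (le_of_eq c.abs_one) ?_)
      simp only [c.habs_mul, c.abs_inv]
      rw [hξa, hax]
      rw [← zpow_neg, ← zpow_add₀ (ne_of_gt hq0), ← zpow_add₀ (ne_of_gt hq0)]
      rw [show m + (-s + -s) = 0 by omega, zpow_zero]
    have h2 : c.abs (y - x) ≤ 1 := by rwa [zpow_zero] at hy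
    calc c.abs (1 + ξ * (x⁻¹ * x⁻¹)) * c.abs (y - x) ≤ 1 * 1 :=
          mul_le_mul h1 h2 (c.habs_nonneg _) (by norm_num)
    _ = 1 := by norm_num
  have hquad : c.ψ (ξ * (y - x)^2 * (x⁻¹ * x⁻¹) * y⁻¹) = 1 := by
    apply c.hψ_triv
    simp only [c.habs_mul, c.abs_inv]
    rw [hξa, hax, hay]
    have hsq : c.abs ((y - x)^2) ≤ 1 := by
      rw [c.abs_pow]
      have hy1 : c.abs (y - x) ≤ 1 := by rwa [zpow_zero] at hy
      rw [sq]
      nlinarith [mul_le_mul hy1 hy1 (c.habs_nonneg (y - x)) zero_le_one]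
    have hfin : c.q ^ m * ((c.q ^ s)⁻¹ * (c.q ^ s)⁻¹) * (c.q ^ s)⁻¹ = c.q ^ (-s) := by
      rw [← zpow_neg, ← zpow_add₀ (ne_of_gt hq0),
        ← zpow_add₀ (ne_of_gt hq0), ← zpow_add₀ (ne_of_gt hq0)]
      congr 1
      omega
    calc c.q ^ m * c.abs ((y-x)^2) * ((c.q ^ s)⁻¹ * (c.q ^ s)⁻¹) * (c.q ^ s)⁻¹
        ≤ c.q ^ m * 1 * ((c.q ^ s)⁻¹ * (c.q ^ s)⁻¹) * (c.q ^ s)⁻¹ := by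
          apply mul_le_mul_of_nonneg_right _ (by positivity)
          apply mul_le_mul_of_nonneg_right _ (by positivity)
          exact mul_le_mul_of_nonneg_left hsq (zpow_pos hq0 m).le
    _ = c.q ^ (-s) := by rw [mul_one]; exact hfin
    _ ≤ 1 := by
          rw [show (1:ℝ) = c.q ^ (0:ℤ) from (zpow_zero c.q).symm]
          exact zpow_le_zpow_right₀ c.hq.le (by omega)
  rw [hlin, hquad, mul_one, mul_one]


lemma bad_sphere (ξ : F) {m k : ℤ} (hξa : c.abs ξ = c.q ^ m) (hm : 3 ≤ m) (hk : k ≤ 0)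
    (hbad : 2*k ≠ -m) :
    IntegrableOn (fun x => c.ψ (x⁻¹ - ξ*x)) (c.sph k) c.μ ∧
    ∫ x in c.sph k, c.ψ (x⁻¹ - ξ*x) ∂c.μ = 0 := by
  classical
  have hq0 : (0:ℝ) < c.q := c.q_pos
  set j := min (-m) (2*k) with hj
  set r := j + 1 with hr
  have hjk : j < k := by omega
  have hrk : r < k := by omega
  have h2j3k : 2*j ≤ 3*k := by omega
  have h2r3k : 2*r ≤ 3*k := by omega
  have hjr : j ≤ r := by omega
  have hsub : c.sph k ⊆ c.ball k := fun x hx => le_of_eq hx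
  have hcball : ∀ x ∈ c.sph k, c.abs (ξ + x⁻¹ * x⁻¹) ≤ c.q ^ (-j) := by
    intro x hx
    refine le_trans (c.habs_add _ _) (max_le ?_ ?_)
    · rw [hξa]
      exact zpow_le_zpow_right₀ c.hq.le (by omega)
    · rw [c.habs_mul, c.abs_inv, c.abs_of_mem_sph hx, ← zpow_neg,
        ← zpow_add₀ (ne_of_gt hq0)]
      exact zpow_le_zpow_right₀ c.hq.le (by omega)
  have hcl : ∀ x ∈ c.sph k, ∀ y : F, c.abs (y - x) ≤ c.q ^ j → y ∈ c.sph k :=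
    fun x hx y hy => c.sph_stable hjk hx hy
  have hf : ∀ x ∈ c.sph k, ∀ y : F, c.abs (y - x) ≤ c.q ^ j →
      (fun x => c.ψ (x⁻¹ - ξ*x)) y = (fun x => c.ψ (x⁻¹ - ξ*x)) x := by
    intro x hx y hy
    exact c.g_const ξ hjk h2j3k hx hy (hcball x hx)
  obtain ⟨hIO, hEq⟩ := c.integral_loc_const hsub hcl hf
  refine ⟨hIO, ?_⟩
  rw [hEq]
  set S := (c.finite_image j k (c.sph k) hsub).toFinset with hS
  have hmemS : ∀ z ∈ S, Quotient.out z ∈ c.sph k := by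
    intro z hz
    rw [hS, Set.Finite.mem_toFinset] at hz
    obtain ⟨a, haA, hae⟩ := hz
    exact c.sph_stable hjk haA (c.abs_out_sub hae)
  -- the fiber map to the coarser quotient
  have hle : c.bgr j ≤ (c.bgr r).comap (AddMonoidHom.id F) := by
    intro x hx
    exact le_trans hx (zpow_le_zpow_right₀ c.hq.le hjr)
  set p : F ⧸ c.bgr j →+ F ⧸ c.bgr r :=
    QuotientAddGroup.map (c.bgr j) (c.bgr r) (AddMonoidHom.id F) hle with hp
  have hpmk : ∀ x : F, p (QuotientAddGroup.mk x) = QuotientAddGroup.mk x := by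
    intro x
    rw [hp]
    exact QuotientAddGroup.map_mk _ _ _ hle x
  obtain ⟨z₀, hz₀a, hz₀ne⟩ := c.exists_nontriv
  suffices hsum : ∑ z ∈ S, c.ψ ((Quotient.out z)⁻¹ - ξ * Quotient.out z) = 0 by
    have : ∑ z ∈ S, (c.q ^ j) • c.ψ ((Quotient.out z)⁻¹ - ξ * Quotient.out z)
        = (c.q ^ j) • ∑ z ∈ S, c.ψ ((Quotient.out z)⁻¹ - ξ * Quotient.out z) :=
      (Finset.smul_sum).symm
    rw [this, hsum, smul_zero]
  rw [← Finset.sum_fiberwise_of_maps_to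
    (g := fun z => p z) (t := S.image (fun z => p z))
    (fun z hz => Finset.mem_image_of_mem _ hz)
    (fun z => c.ψ ((Quotient.out z)⁻¹ - ξ * Quotient.out z))]
  apply Finset.sum_eq_zero
  intro w hw
  -- base point of the fiber
  obtain ⟨zw, hzwS, hzww⟩ := Finset.mem_image.1 hw
  have hzw' := hzwS
  rw [hS, Set.Finite.mem_toFinset] at hzw'
  obtain ⟨a, haA, hae⟩ := hzw'
  have hwa : (QuotientAddGroup.mk a : F ⧸ c.bgr r) = w := by
    rw [← hzww, ← hae, hpmk]
  have hx₀ : Quotient.out w ∈ c.sph k := c.sph_stable hrk haA (c.abs_out_sub hwa)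
  set x₀ := Quotient.out w with hx₀def
  set cc := ξ + x₀⁻¹ * x₀⁻¹ with hcc
  have hccabs : c.abs cc = c.q ^ (-j) := by
    have habsx2 : c.abs (x₀⁻¹ * x₀⁻¹) = c.q ^ (-2*k) := by
      rw [c.habs_mul, c.abs_inv, c.abs_of_mem_sph hx₀, ← zpow_neg,
        ← zpow_add₀ (ne_of_gt hq0)]
      congr 1
      ring
    rcases lt_or_gt_of_ne hbad with hcase | hcase
    · -- 2k < -m : the x₀⁻² term dominates, j = 2k
      have hjeq : j = 2*k := by omega
      have hlt : c.abs ξ < c.abs (x₀⁻¹ * x₀⁻¹) := by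
        rw [hξa, habsx2]
        exact zpow_lt_zpow_right₀ c.hq (by omega)
      rw [hcc, add_comm, c.abs_add_eq hlt, habsx2, hjeq]
      congr 1
      ring
    · -- 2k > -m : ξ dominates, j = -m
      have hjeq : j = -m := by omega
      have hlt : c.abs (x₀⁻¹ * x₀⁻¹) < c.abs ξ := by
        rw [hξa, habsx2]
        exact zpow_lt_zpow_right₀ c.hq (by omega)
      rw [hcc, c.abs_add_eq hlt, hξa, hjeq, neg_neg]
  have hcc0 : cc ≠ 0 := by
    intro h
    rw [h, c.abs_zero] at hccabs
    exact absurd hccabs.symm (ne_of_gt (zpow_pos hq0 _))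
  set y₀ := -(cc⁻¹ * z₀) with hy₀def
  have hy₀abs : c.abs y₀ = c.q ^ r := by
    rw [hy₀def, c.abs_neg, c.habs_mul, c.abs_inv, hccabs, hz₀a, ← zpow_neg, neg_neg, hr,
      zpow_add_one₀ (ne_of_gt hq0)]
  have hcy₀ : -(cc * y₀) = z₀ := by
    rw [hy₀def]
    field_simp
  -- facts about fiber elements
  have hfiber : ∀ z ∈ S.filter (fun z => p z = w), Quotient.out z ∈ c.sph k ∧
      c.abs (Quotient.out z - x₀) ≤ c.q ^ r := by
    intro z hz
    rw [Finset.mem_filter] at hz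
    obtain ⟨hzS, hzw⟩ := hz
    refine ⟨hmemS z hzS, ?_⟩
    have : (QuotientAddGroup.mk (Quotient.out z) : F ⧸ c.bgr r) = w := by
      rw [← hzw, ← c.mk_out z, hpmk, c.mk_out]
    rw [hx₀def]
    rw [c.abs_sub_comm]
    exact c.abs_out_sub this
  -- the shifted element stays in the fiber
  have hshift_mem : ∀ (u : F), c.abs u = c.q ^ r →
      ∀ z ∈ S.filter (fun z => p z = w), z + QuotientAddGroup.mk u ∈ S.filter (fun z => p z = w) := by
    intro u hu z hz
    rw [Finset.mem_filter] at hz ⊢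
    obtain ⟨hzS, hzw⟩ := hz
    constructor
    · rw [hS, Set.Finite.mem_toFinset] at hzS ⊢
      obtain ⟨b, hbA, hbe⟩ := hzS
      refine ⟨b + u, ?_, ?_⟩
      · apply c.sph_stable hrk hbA
        rw [add_sub_cancel_left, hu]
      · rw [← hbe]
        rfl
    · rw [map_add, hzw, hpmk]
      have : (QuotientAddGroup.mk u : F ⧸ c.bgr r) = 0 :=
        (QuotientAddGroup.eq_zero_iff u).2 (le_of_eq hu)
      rw [this, add_zero]
  -- value transformation under the shift
  have hval : ∀ z ∈ S.filter (fun z => p z = w),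
      c.ψ ((Quotient.out (z + QuotientAddGroup.mk y₀))⁻¹ - ξ * Quotient.out (z + QuotientAddGroup.mk y₀))
        = c.ψ z₀ * c.ψ ((Quotient.out z)⁻¹ - ξ * Quotient.out z) := by
    intro z hz
    obtain ⟨huS, hux⟩ := hfiber z hz
    set u := Quotient.out z with hu
    have hz' := hshift_mem y₀ hy₀abs z hz
    obtain ⟨hu'S, hu'x⟩ := hfiber _ hz'
    set u' := Quotient.out (z + QuotientAddGroup.mk y₀) with hu'
    -- local expansions around x₀
    have hgu : c.ψ (u⁻¹ - ξ * u) = c.ψ (x₀⁻¹ - ξ * x₀) * c.ψ (-(cc * (u - x₀))) :=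
      c.g_local ξ hrk h2r3k hx₀ hux
    have hgu' : c.ψ (u'⁻¹ - ξ * u') = c.ψ (x₀⁻¹ - ξ * x₀) * c.ψ (-(cc * (u' - x₀))) :=
      c.g_local ξ hrk h2r3k hx₀ hu'x
    -- u' = u + y₀ + b with b small
    have hb : c.abs (u' - (u + y₀)) ≤ c.q ^ j := by
      apply (c.mk_eq_iff).1
      rw [hu', c.mk_out]
      show z + QuotientAddGroup.mk y₀ = QuotientAddGroup.mk (u + y₀)
      rw [← c.mk_out z]
      rfl
    have hdecomp : -(cc * (u' - x₀))
        = -(cc * (u - x₀)) + -(cc * y₀) + -(cc * (u' - (u + y₀))) := by ring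
    have hsmall : c.ψ (-(cc * (u' - (u + y₀)))) = 1 := by
      apply c.hψ_triv
      rw [c.abs_neg, c.habs_mul, hccabs]
      calc c.q ^ (-j) * c.abs (u' - (u + y₀)) ≤ c.q ^ (-j) * c.q ^ j :=
            mul_le_mul_of_nonneg_left hb (zpow_pos hq0 _).le
      _ = 1 := by rw [← zpow_add₀ (ne_of_gt hq0)]; simp
    rw [hgu, hgu', hdecomp, c.hψ_add, c.hψ_add, hcy₀, hsmall, mul_one]
    ring
  -- the character sum over the fiber vanishes
  set T := S.filter (fun z => p z = w) with hT
  set sig := ∑ z ∈ T, c.ψ ((Quotient.out z)⁻¹ - ξ * Quotient.out z) with hsigdef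
  have hkey : sig = c.ψ z₀ * sig := by
    have hre : sig = ∑ z ∈ T, c.ψ ((Quotient.out (z + QuotientAddGroup.mk y₀))⁻¹
        - ξ * Quotient.out (z + QuotientAddGroup.mk y₀)) := by
      rw [hsigdef]
      apply Finset.sum_nbij' (i := fun z => z + QuotientAddGroup.mk (-y₀))
        (j := fun z => z + QuotientAddGroup.mk y₀)
      · intro z hz
        have h' : c.abs (-y₀) = c.q ^ r := by rw [c.abs_neg, hy₀abs]
        exact hshift_mem (-y₀) h' z hz
      · intro z hz
        exact hshift_mem y₀ hy₀abs z hz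
      · intro z _
        rw [add_assoc, ← QuotientAddGroup.mk_add, neg_add_cancel]
        simp
      · intro z _
        rw [add_assoc, ← QuotientAddGroup.mk_add, add_neg_cancel]
        simp
      · intro z hz
        have heq : (z + QuotientAddGroup.mk (-y₀)) + QuotientAddGroup.mk y₀ = z := by
          rw [add_assoc, ← QuotientAddGroup.mk_add, neg_add_cancel]
          simp
        rw [heq]
    calc sig = ∑ z ∈ T, c.ψ ((Quotient.out (z + QuotientAddGroup.mk y₀))⁻¹
        - ξ * Quotient.out (z + QuotientAddGroup.mk y₀)) := hre
    _ = ∑ z ∈ T, c.ψ z₀ * c.ψ ((Quotient.out z)⁻¹ - ξ * Quotient.out z) :=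
        Finset.sum_congr rfl (fun z hz => hval z hz)
    _ = c.ψ z₀ * sig := (Finset.mul_sum _ _ _).symm
  have hsigdef0 : sig = 0 := by
    have h1 : (1 - c.ψ z₀) * sig = 0 := by
      rw [sub_mul, one_mul, ← hkey, sub_self]
    rcases mul_eq_zero.1 h1 with h | h
    · exact absurd (by linear_combination -h : c.ψ z₀ = 1) hz₀ne
    · exact h
  exact hsigdef0

lemma crit_sphere (ξ : F) {m s : ℤ} (hms : m = 2*s) (hm : 3 ≤ m) (hξa : c.abs ξ = c.q ^ m) :
    IntegrableOn (fun x => c.ψ (x⁻¹ - ξ*x)) (c.sph (-s)) c.μ ∧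
    ∫ x in c.sph (-s), c.ψ (x⁻¹ - ξ*x) ∂c.μ
      = (c.q ^ (-m) : ℝ) • ∫ x in c.sph s, c.ψ (ξ * x⁻¹ - x) ∂c.μ := by
  classical
  have hq0 : (0:ℝ) < c.q := c.q_pos
  have hs2 : 2 ≤ s := by omega
  have hξ0 : ξ ≠ 0 := by
    intro h
    rw [h, c.abs_zero] at hξa
    exact absurd hξa.symm (ne_of_gt (zpow_pos hq0 m))
  -- LHS expansion
  have hjk₁ : (-m) < (-s) := by omega
  have h2j3k₁ : 2*(-m) ≤ 3*(-s) := by omega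
  have hsub₁ : c.sph (-s) ⊆ c.ball (-s) := fun x hx => le_of_eq hx
  have hcl₁ : ∀ x ∈ c.sph (-s), ∀ y : F, c.abs (y - x) ≤ c.q ^ (-m) → y ∈ c.sph (-s) :=
    fun x hx y hy => c.sph_stable hjk₁ hx hy
  have hf₁ : ∀ x ∈ c.sph (-s), ∀ y : F, c.abs (y - x) ≤ c.q ^ (-m) →
      (fun x => c.ψ (x⁻¹ - ξ*x)) y = (fun x => c.ψ (x⁻¹ - ξ*x)) x := by
    intro x hx y hy
    refine c.g_const ξ hjk₁ h2j3k₁ hx hy ?_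
    rw [neg_neg]
    refine le_trans (c.habs_add _ _) (max_le ?_ ?_)
    · rw [hξa]
    · rw [c.habs_mul, c.abs_inv, c.abs_of_mem_sph hx, ← zpow_neg,
        ← zpow_add₀ (ne_of_gt hq0), neg_neg]
      exact zpow_le_zpow_right₀ c.hq.le (by omega)
  obtain ⟨hIO₁, hEq₁⟩ := c.integral_loc_const hsub₁ hcl₁ hf₁
  -- RHS expansion
  have hjk₂ : (0:ℤ) < s := by omega
  have hsub₂ : c.sph s ⊆ c.ball s := fun x hx => le_of_eq hx
  have hcl₂ : ∀ x ∈ c.sph s, ∀ y : F, c.abs (y - x) ≤ c.q ^ (0:ℤ) → y ∈ c.sph s :=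
    fun x hx y hy => c.sph_stable hjk₂ hx hy
  have hf₂ : ∀ x ∈ c.sph s, ∀ y : F, c.abs (y - x) ≤ c.q ^ (0:ℤ) →
      (fun x => c.ψ (ξ * x⁻¹ - x)) y = (fun x => c.ψ (ξ * x⁻¹ - x)) x := by
    intro x hx y hy
    exact c.h_const ξ hms (by omega) hξa hx hy
  obtain ⟨hIO₂, hEq₂⟩ := c.integral_loc_const hsub₂ hcl₂ hf₂
  refine ⟨hIO₁, ?_⟩
  rw [hEq₁, hEq₂]
  set S₁ := (c.finite_image (-m) (-s) (c.sph (-s)) hsub₁).toFinset with hS₁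
  set S₂ := (c.finite_image 0 s (c.sph s) hsub₂).toFinset with hS₂
  -- quotient maps induced by multiplication by ξ and ξ⁻¹
  have hleΦ : c.bgr (-m) ≤ (c.bgr 0).comap (AddMonoidHom.mulLeft ξ) := by
    intro x hx
    show c.abs (ξ * x) ≤ c.q ^ (0:ℤ)
    rw [c.habs_mul, hξa, zpow_zero]
    calc c.q ^ m * c.abs x ≤ c.q ^ m * c.q ^ (-m) :=
          mul_le_mul_of_nonneg_left hx (zpow_pos hq0 m).le
    _ = 1 := by rw [← zpow_add₀ (ne_of_gt hq0)]; simp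
  have hleΨ : c.bgr 0 ≤ (c.bgr (-m)).comap (AddMonoidHom.mulLeft ξ⁻¹) := by
    intro x hx
    show c.abs (ξ⁻¹ * x) ≤ c.q ^ (-m)
    rw [c.habs_mul, c.abs_inv, hξa, ← zpow_neg]
    calc c.q ^ (-m) * c.abs x ≤ c.q ^ (-m) * c.q ^ (0:ℤ) :=
          mul_le_mul_of_nonneg_left hx (zpow_pos hq0 _).le
    _ = c.q ^ (-m) := by rw [zpow_zero, mul_one]
  set Φ : F ⧸ c.bgr (-m) →+ F ⧸ c.bgr 0 :=
    QuotientAddGroup.map _ _ (AddMonoidHom.mulLeft ξ) hleΦ with hΦdef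
  set Ψm : F ⧸ c.bgr 0 →+ F ⧸ c.bgr (-m) :=
    QuotientAddGroup.map _ _ (AddMonoidHom.mulLeft ξ⁻¹) hleΨ with hΨdef
  have hΦmk : ∀ x : F, Φ (QuotientAddGroup.mk x) = QuotientAddGroup.mk (ξ * x) := by
    intro x
    rw [hΦdef]
    exact QuotientAddGroup.map_mk _ _ _ hleΦ x
  have hΨmk : ∀ x : F, Ψm (QuotientAddGroup.mk x) = QuotientAddGroup.mk (ξ⁻¹ * x) := by
    intro x
    rw [hΨdef]
    exact QuotientAddGroup.map_mk _ _ _ hleΨ x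
  have hmuls : ∀ x ∈ c.sph (-s), ξ * x ∈ c.sph s := by
    intro x hx
    show c.abs (ξ * x) = c.q ^ s
    rw [c.habs_mul, hξa, c.abs_of_mem_sph hx, ← zpow_add₀ (ne_of_gt hq0)]
    congr 1
    omega
  have hmuls' : ∀ x ∈ c.sph s, ξ⁻¹ * x ∈ c.sph (-s) := by
    intro x hx
    show c.abs (ξ⁻¹ * x) = c.q ^ (-s)
    rw [c.habs_mul, c.abs_inv, hξa, c.abs_of_mem_sph hx, ← zpow_neg,
      ← zpow_add₀ (ne_of_gt hq0)]
    congr 1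
    omega
  have hmem₁ : ∀ z ∈ S₁, Quotient.out z ∈ c.sph (-s) := by
    intro z hz
    rw [hS₁, Set.Finite.mem_toFinset] at hz
    obtain ⟨a, haA, hae⟩ := hz
    exact c.sph_stable hjk₁ haA (c.abs_out_sub hae)
  have hsum : ∑ z ∈ S₁, c.ψ ((Quotient.out z)⁻¹ - ξ * Quotient.out z)
      = ∑ z ∈ S₂, c.ψ (ξ * (Quotient.out z)⁻¹ - Quotient.out z) := by
    apply Finset.sum_nbij' (i := fun z => Φ z) (j := fun z => Ψm z)
    · intro z hz
      rw [hS₂, Set.Finite.mem_toFinset]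
      refine ⟨ξ * Quotient.out z, hmuls _ (hmem₁ z hz), ?_⟩
      rw [← hΦmk, c.mk_out]
    · intro z hz
      rw [hS₂, Set.Finite.mem_toFinset] at hz
      obtain ⟨a, haA, hae⟩ := hz
      rw [hS₁, Set.Finite.mem_toFinset]
      refine ⟨ξ⁻¹ * a, hmuls' _ haA, ?_⟩
      rw [← hΨmk, hae]
    · intro z _
      rw [← c.mk_out z, hΦmk, hΨmk, inv_mul_cancel_left₀ hξ0]
    · intro z _
      rw [← c.mk_out z, hΨmk, hΦmk, mul_inv_cancel_left₀ hξ0]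
    · intro z hz
      -- value identity
      have hu : Quotient.out z ∈ c.sph (-s) := hmem₁ z hz
      set u := Quotient.out z with hudef
      have hu0 : u ≠ 0 := c.mem_sph_ne_zero hu
      have hΦz : Φ z = QuotientAddGroup.mk (ξ * u) := by
        rw [← c.mk_out z, hΦmk]
      have hvu : c.abs (Quotient.out (Φ z) - ξ * u) ≤ c.q ^ (0:ℤ) :=
        c.abs_out_sub hΦz.symm
      have hxi_u : ξ * u ∈ c.sph s := hmuls u hu
      have hval : c.ψ (ξ * (Quotient.out (Φ z))⁻¹ - Quotient.out (Φ z))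
          = c.ψ (ξ * (ξ * u)⁻¹ - ξ * u) :=
        c.h_const ξ hms (by omega) hξa hxi_u hvu
      rw [hval]
      congr 1
      rw [mul_inv_rev, ← mul_assoc, mul_comm ξ u⁻¹, mul_assoc, mul_inv_cancel₀ hξ0,
        mul_one]
  -- put everything together
  calc ∑ z ∈ S₁, (c.q ^ (-m)) • c.ψ ((Quotient.out z)⁻¹ - ξ * Quotient.out z)
      = (c.q ^ (-m) : ℝ) • ∑ z ∈ S₁, c.ψ ((Quotient.out z)⁻¹ - ξ * Quotient.out z) :=
        Finset.smul_sum.symm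
  _ = (c.q ^ (-m) : ℝ) • ∑ z ∈ S₂, c.ψ (ξ * (Quotient.out z)⁻¹ - Quotient.out z) := by
        rw [hsum]
  _ = (c.q ^ (-m) : ℝ) • ∑ z ∈ S₂, (c.q ^ (0:ℤ)) • c.ψ (ξ * (Quotient.out z)⁻¹ - Quotient.out z) := by
        congr 1
        refine Finset.sum_congr rfl ?_
        intro z _
        rw [zpow_zero, one_smul]

lemma meas_zero_singleton : c.μ {(0:F)} = 0 := by
  have hle : ∀ n : ℕ, c.μ {(0:F)} ≤ (ENNReal.ofReal (c.q⁻¹))^n := by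
    intro n
    calc c.μ {(0:F)} ≤ c.μ (c.ball (-(n:ℤ))) := by
          apply measure_mono
          intro x hx
          rw [Set.mem_singleton_iff] at hx
          rw [hx]
          exact c.mem_ball_zero
    _ = ENNReal.ofReal (c.q ^ (-(n:ℤ))) := c.meas_ball _
    _ = (ENNReal.ofReal (c.q⁻¹))^n := by
          rw [zpow_neg, zpow_natCast, ← inv_pow,
            ENNReal.ofReal_pow (inv_nonneg.2 c.q_pos.le)]
  have htend : Filter.Tendsto (fun n : ℕ => (ENNReal.ofReal (c.q⁻¹))^n)
      Filter.atTop (nhds 0) := by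
    apply ENNReal.tendsto_pow_atTop_nhds_zero_of_lt_one
    rw [← ENNReal.ofReal_one]
    apply ENNReal.ofReal_lt_ofReal_iff_of_nonneg (inv_nonneg.2 c.q_pos.le) |>.2
    rw [inv_lt_one_iff₀]
    right
    exact c.hq
  exact le_antisymm (ge_of_tendsto' htend hle) zero_le

lemma main (ξ : F) (hξ : max 1 (c.q ^ 2) < c.abs ξ) :
    ∫ x in {x : F | c.abs x ≤ 1}, c.ψ (x⁻¹ - ξ * x) ∂c.μ
      = ((c.abs ξ)⁻¹ : ℝ) • ∫ x in {x : F | (c.abs x) ^ 2 = c.abs ξ}, c.ψ (ξ * x⁻¹ - x) ∂c.μ := by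
  classical
  have hq0 : (0:ℝ) < c.q := c.q_pos
  have h1ξ : 1 < c.abs ξ := lt_of_le_of_lt (le_max_left _ _) hξ
  have hξ0 : ξ ≠ 0 := by
    intro h
    rw [h, c.abs_zero] at h1ξ
    linarith
  obtain ⟨m, hξa⟩ := c.habs_vals ξ hξ0
  have hm3 : 3 ≤ m := by
    have h2 : c.q ^ (2:ℤ) < c.q ^ m := by
      rw [← hξa]
      refine lt_of_le_of_lt ?_ hξ
      have h2eq : c.q ^ (2:ℤ) = c.q ^ (2:ℕ) := by norm_cast
      rw [h2eq]
      exact le_max_right _ _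
    have := (zpow_lt_zpow_iff_right₀ c.hq).1 h2
    omega
  -- rewrite the domain as ball 0
  have hball : {x : F | c.abs x ≤ 1} = c.ball 0 := by
    rw [c.ball_zero_eq]
  rw [hball]
  -- spheres
  have hsph_meas : ∀ n : ℕ, MeasurableSet (c.sph (-(n:ℤ))) :=
    fun n => c.measurableSet_sph _
  have hsph_disj : Pairwise (Function.onFun Disjoint fun n : ℕ => c.sph (-(n:ℤ))) := by
    intro a b hab
    rw [Function.onFun, Set.disjoint_left]
    intro x hxa hxb
    have h1 : c.abs x = c.q ^ (-(a:ℤ)) := hxa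
    have h2 : c.abs x = c.q ^ (-(b:ℤ)) := hxb
    rw [h1] at h2
    have := zpow_right_injective₀ (by linarith : (0:ℝ) < c.q) (ne_of_gt c.hq) h2
    omega
  have hUsub : (⋃ n : ℕ, c.sph (-(n:ℤ))) ⊆ c.ball 0 := by
    intro x hx
    obtain ⟨n, hn⟩ := Set.mem_iUnion.1 hx
    show c.abs x ≤ c.q ^ (0:ℤ)
    rw [c.abs_of_mem_sph hn]
    exact zpow_le_zpow_right₀ c.hq.le (by omega)
  have hUeq : c.ball 0 =ᵐ[c.μ] (⋃ n : ℕ, c.sph (-(n:ℤ))) := by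
    rw [MeasureTheory.ae_eq_set]
    constructor
    · apply measure_mono_null _ c.meas_zero_singleton
      intro x ⟨hx1, hx2⟩
      rw [Set.mem_singleton_iff]
      by_contra hx0
      obtain ⟨ℓ, hℓ⟩ := c.habs_vals x hx0
      have hℓ0 : ℓ ≤ 0 := by
        have : c.q ^ ℓ ≤ c.q ^ (0:ℤ) := by
          rw [← hℓ, zpow_zero]
          exact hx1
        exact (zpow_le_zpow_iff_right₀ c.hq).1 this
      apply hx2
      apply Set.mem_iUnion.2 ⟨(-ℓ).toNat, ?_⟩
      show c.abs x = c.q ^ (-((-ℓ).toNat:ℤ))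
      rw [hℓ]
      congr 1
      omega
    · rw [Set.diff_eq_empty.2 hUsub]
      exact measure_empty
  rw [setIntegral_congr_set hUeq]
  -- integrability on each sphere
  have hIO_n : ∀ n : ℕ, IntegrableOn (fun x => c.ψ (x⁻¹ - ξ*x)) (c.sph (-(n:ℤ))) c.μ := by
    intro n
    rcases eq_or_ne (2*(-(n:ℤ))) (-m) with heq | hne
    · have hms : m = 2*(n:ℤ) := by omega
      exact (c.crit_sphere ξ hms hm3 hξa).1
    · exact (c.bad_sphere ξ hξa hm3 (by omega) hne).1
  -- global integrability
  have hIOn : IntegrableOn (fun x => c.ψ (x⁻¹ - ξ*x)) (⋃ n : ℕ, c.sph (-(n:ℤ))) c.μ := by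
    constructor
    · rw [Measure.restrict_iUnion hsph_disj hsph_meas]
      rw [aestronglyMeasurable_sum_measure_iff]
      exact fun n => (hIO_n n).aestronglyMeasurable
    · show ∫⁻ x, (‖c.ψ (x⁻¹ - ξ*x)‖₊ : ℝ≥0∞)
          ∂(c.μ.restrict (⋃ n : ℕ, c.sph (-(n:ℤ)))) < ⊤
      have hnorm : ∀ x : F, (‖c.ψ (x⁻¹ - ξ*x)‖₊ : ℝ≥0∞) = 1 := by
        intro x
        have h1 : ‖c.ψ (x⁻¹ - ξ*x)‖ = 1 := by
          exact c.psi_abs_one _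
        rw [show (1 : ℝ≥0∞) = ((1:NNReal) : ℝ≥0∞) from rfl]
        congr 1
        ext
        rw [coe_nnnorm, h1, NNReal.coe_one]
      calc ∫⁻ x, (‖c.ψ (x⁻¹ - ξ*x)‖₊ : ℝ≥0∞)
            ∂(c.μ.restrict (⋃ n : ℕ, c.sph (-(n:ℤ))))
          = ∫⁻ _, 1 ∂(c.μ.restrict (⋃ n : ℕ, c.sph (-(n:ℤ)))) := by
            apply lintegral_congr
            intro x
            exact hnorm x
      _ = c.μ (⋃ n : ℕ, c.sph (-(n:ℤ))) := by
            rw [lintegral_one, Measure.restrict_apply_univ]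
      _ ≤ c.μ (c.ball 0) := measure_mono hUsub
      _ < ⊤ := by
            rw [c.meas_ball]
            exact ENNReal.ofReal_lt_top
  rw [integral_iUnion hsph_meas hsph_disj hIOn]
  -- case on the parity of m
  rcases Int.even_or_odd m with ⟨s, hs⟩ | ⟨s, hs⟩
  · -- m = 2s : critical sphere survives
    have hms : m = 2*s := by omega
    have hs2 : 2 ≤ s := by omega
    have hsnat : ((s.toNat : ℤ)) = s := Int.toNat_of_nonneg (by omega)
    have hTset : {x : F | (c.abs x) ^ 2 = c.abs ξ} = c.sph s := by
      ext x
      simp only [Set.mem_setOf_eq]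
      constructor
      · intro hx
        rcases eq_or_ne x 0 with rfl | hx0
        · rw [c.abs_zero] at hx
          norm_num at hx
          rw [hξa] at hx
          exact absurd hx.symm (ne_of_gt (zpow_pos hq0 m))
        · obtain ⟨ℓ, hℓ⟩ := c.habs_vals x hx0
          rw [hℓ, hξa] at hx
          have h2 : c.q ^ (2*ℓ) = c.q ^ m := by
            rw [← hx, ← zpow_natCast (c.q ^ ℓ) 2, ← zpow_mul]
            congr 1
            push_cast
            ring
          have := zpow_right_injective₀ (by linarith) (ne_of_gt c.hq) h2
          show c.abs x = c.q ^ s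
          rw [hℓ]
          congr 1
          omega
      · intro hx
        rw [show c.abs x = c.q ^ s from hx, hξa,
          ← zpow_natCast (c.q ^ s) 2, ← zpow_mul]
        congr 1
        push_cast
        omega
    rw [hTset]
    rw [tsum_eq_single s.toNat ?_]
    · have hidx : (-(s.toNat:ℤ)) = -s := by omega
      rw [hidx]
      rw [(c.crit_sphere ξ hms hm3 hξa).2]
      congr 1
      rw [hξa, ← zpow_neg]
    · intro n hn
      refine (c.bad_sphere ξ hξa hm3 (by omega) ?_).2
      omega
  · -- m odd : everything vanishes
    have hTset : {x : F | (c.abs x) ^ 2 = c.abs ξ} = (∅ : Set F) := by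
      ext x
      simp only [Set.mem_setOf_eq, Set.mem_empty_iff_false, iff_false]
      intro hx
      rcases eq_or_ne x 0 with rfl | hx0
      · rw [c.abs_zero] at hx
        norm_num at hx
        rw [hξa] at hx
        exact absurd hx.symm (ne_of_gt (zpow_pos hq0 m))
      · obtain ⟨ℓ, hℓ⟩ := c.habs_vals x hx0
        rw [hℓ, hξa] at hx
        have h2 : c.q ^ (2*ℓ) = c.q ^ m := by
          rw [← hx, ← zpow_natCast (c.q ^ ℓ) 2, ← zpow_mul]
          congr 1
          push_cast
          ring
        have := zpow_right_injective₀ (by linarith) (ne_of_gt c.hq) h2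
        omega
    rw [hTset]
    have hzero : ∀ n : ℕ, ∫ x in c.sph (-(n:ℤ)), c.ψ (x⁻¹ - ξ*x) ∂c.μ = 0 := by
      intro n
      exact (c.bad_sphere ξ hξa hm3 (by omega) (by omega)).2
    calc ∑' n : ℕ, ∫ x in c.sph (-(n:ℤ)), c.ψ (x⁻¹ - ξ*x) ∂c.μ
        = ∑' _ : ℕ, (0:ℂ) := by
          congr 1
          funext n
          exact hzero n
    _ = 0 := tsum_zero
    _ = ((c.abs ξ)⁻¹ : ℝ) • ∫ x in (∅ : Set F), c.ψ (ξ * x⁻¹ - x) ∂c.μ := by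
          rw [Measure.restrict_empty, integral_zero_measure, smul_zero]

end Ctx
end Stmt19

/-- Fourier transform of `ψ(1/x)1_𝔬(x)`: for `|ξ| > max(1, q²)`,
`∫_𝔬 ψ(x⁻¹ - ξx) dx = |ξ|⁻¹ ∫_{|x|² = |ξ|} ψ(ξx⁻¹ - x) dx`. -/
theorem stmt_19 {F : Type*} [Field F] [MeasurableSpace F]
    (μ : Measure F) (abs : F → ℝ) (q : ℝ) (ψ : F → ℂ)
    (hq : 1 < q)
    (habs_meas : Measurable abs)
    (habs_nonneg : ∀ x, 0 ≤ abs x)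
    (habs_eq_zero : ∀ x, abs x = 0 ↔ x = 0)
    (habs_mul : ∀ x y, abs (x * y) = abs x * abs y)
    (habs_add : ∀ x y, abs (x + y) ≤ max (abs x) (abs y))
    (habs_vals : ∀ x : F, x ≠ 0 → ∃ n : ℤ, abs x = q ^ n)
    (hμ_inv : ∀ (a : F) (s : Set F), MeasurableSet s → μ ((fun x => a + x) ⁻¹' s) = μ s)
    (hμ_scale : ∀ a : F, a ≠ 0 → ∀ s : Set F, MeasurableSet s →
      μ ((fun x => a * x) ⁻¹' s) = ENNReal.ofReal ((abs a)⁻¹) * μ s)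
    (hμ_fin : ∀ n : ℤ, μ {x : F | abs x ≤ q ^ n} < ⊤)
    (hμ_int : μ {x : F | abs x ≤ 1} = 1)
    (hψ_meas : Measurable ψ)
    (hψ_add : ∀ x y, ψ (x + y) = ψ x * ψ y)
    (hψ_triv : ∀ x, abs x ≤ 1 → ψ x = 1)
    (hψ_nontriv : ∃ x, abs x ≤ q ∧ ψ x ≠ 1)
    (ξ : F) (hξ : max 1 (q ^ 2) < abs ξ) :
    ∫ x in {x : F | abs x ≤ 1}, ψ (x⁻¹ - ξ * x) ∂μ
      = ((abs ξ)⁻¹ : ℝ) • ∫ x in {x : F | (abs x) ^ 2 = abs ξ}, ψ (ξ * x⁻¹ - x) ∂μ :=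
  Stmt19.Ctx.main
    { μ := μ, abs := abs, q := q, ψ := ψ, hq := hq, habs_meas := habs_meas,
      habs_nonneg := habs_nonneg, habs_eq_zero := habs_eq_zero, habs_mul := habs_mul,
      habs_add := habs_add, habs_vals := habs_vals, hμ_inv := hμ_inv,
      hμ_scale := hμ_scale, hμ_fin := hμ_fin, hμ_int := hμ_int, hψ_meas := hψ_meas,
      hψ_add := hψ_add, hψ_triv := hψ_triv, hψ_nontriv := hψ_nontriv } ξ hξ
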